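/- An LDUI matrix X parametrized by (A,C) is dual unitary if and only if |C_{ij}| = 1 for all i, j and A = diag(C) (i.e. A is the diagonal matrix with entries C_{ii}, and A_{ij} = 0 for i ≠ j). -/

import Mathlib

open Matrix

/-- The LDOI matrix `X^{(3)}_{(A,B,C)} = Σ_{i,j} A_{ij}|ij⟩⟨ij| + Σ_{i≠j} B_{ij}|ii⟩⟨jj|
  + Σ_{i≠j} C_{ij}|ij⟩⟨ji|`. -/
def X3 {d : ℕ} {R : Type*} [CommRing R] (A B C : Matrix (Fin d) (Fin d) R) :
    Matrix (Fin d × Fin d) (Fin d × Fin d) R :=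
  Matrix.of fun p q =>
    (if p.1 = q.1 ∧ p.2 = q.2 then A p.1 p.2 else 0) +
    (if p.1 = p.2 ∧ q.1 = q.2 ∧ p.1 ≠ q.1 then B p.1 q.1 else 0) +
    (if p.1 = q.2 ∧ p.2 = q.1 ∧ p.1 ≠ p.2 then C p.1 p.2 else 0)

/-- The realignment `(X^R)_{ij,kl} = X_{ik,jl}`. -/
def realign {d : ℕ} {R : Type*} [CommRing R]
    (X : Matrix (Fin d × Fin d) (Fin d × Fin d) R) :
    Matrix (Fin d × Fin d) (Fin d × Fin d) R :=
  Matrix.of fun p q => X (p.1, q.1) (p.2, q.2)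

/-- The partial transpose `(X^Γ)_{ij,kl} = X_{il,kj}`. -/
def ptrans {d : ℕ} {R : Type*} [CommRing R]
    (X : Matrix (Fin d × Fin d) (Fin d × Fin d) R) :
    Matrix (Fin d × Fin d) (Fin d × Fin d) R :=
  Matrix.of fun p q => X (p.1, q.2) (q.1, p.2)

/-- The triple (A,B,C) has equal diagonals. -/
def EqDiag {d : ℕ} {R : Type*} [CommRing R] (A B C : Matrix (Fin d) (Fin d) R) : Prop :=
  ∀ i, A i i = B i i ∧ B i i = C i i

lemma star_mul_self_c (z : ℂ) : star z * z = (Complex.normSq z : ℂ) := by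
  have := Complex.mul_conj z; rw [mul_comm] at this; exact this

lemma X3d_apply {d : ℕ} (A C : Matrix (Fin d) (Fin d) ℂ) (p q : Fin d × Fin d) :
    X3 A (Matrix.diagonal fun i => A i i) C p q =
      (if p.1 = q.1 ∧ p.2 = q.2 then A p.1 p.2 else 0) +
      (if p.1 = q.2 ∧ p.2 = q.1 ∧ p.1 ≠ p.2 then C p.1 p.2 else 0) := by
  have h : (if p.1 = p.2 ∧ q.1 = q.2 ∧ p.1 ≠ q.1 then
      (Matrix.diagonal fun i => A i i) p.1 q.1 else 0) = 0 := by
    split_ifs with h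
    · exact Matrix.diagonal_apply_ne _ h.2.2
    · rfl
  simp only [X3, Matrix.of_apply, h, add_zero]

/-- dual-unitarity characterization of LDUI matrices. -/
theorem stmt_10 {d : ℕ} (A C : Matrix (Fin d) (Fin d) ℂ)
    (hdiag : ∀ i, A i i = C i i) :
    (X3 A (Matrix.diagonal fun i => A i i) C ∈ Matrix.unitaryGroup (Fin d × Fin d) ℂ ∧
     realign (X3 A (Matrix.diagonal fun i => A i i) C) ∈
       Matrix.unitaryGroup (Fin d × Fin d) ℂ) ↔
      ((∀ i j, ‖C i j‖ = 1) ∧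
       A = Matrix.diagonal fun i => C i i) := by
  set U := X3 A (Matrix.diagonal fun i => A i i) C with hU
  have hUval : ∀ p q : Fin d × Fin d, U p q =
      (if p.1 = q.1 ∧ p.2 = q.2 then A p.1 p.2 else 0) +
      (if p.1 = q.2 ∧ p.2 = q.1 ∧ p.1 ≠ p.2 then C p.1 p.2 else 0) := X3d_apply A C
  constructor
  · rintro ⟨hX, hR⟩
    have hX' : star U * U = 1 := Matrix.mem_unitaryGroup_iff'.mp hX
    have hR' : star (realign U) * realign U = 1 := Matrix.mem_unitaryGroup_iff'.mp hR
    have keyX : ∀ q : Fin d × Fin d,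
        ∑ p : Fin d × Fin d, star (U p q) * U p q = 1 := by
      intro q
      have h : (star U * U) q q = 1 := by rw [hX']; exact Matrix.one_apply_eq q
      simpa [Matrix.mul_apply, Matrix.star_apply] using h
    have keyR : ∀ q : Fin d × Fin d,
        ∑ p : Fin d × Fin d, star ((realign U) p q) * (realign U) p q = 1 := by
      intro q
      have h : (star (realign U) * realign U) q q = 1 := by
        rw [hR']; exact Matrix.one_apply_eq q
      simpa [Matrix.mul_apply, Matrix.star_apply] using h
    have hCoff : ∀ i j, i ≠ j → Complex.normSq (C i j) = 1 := by
      intro l j hlj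
      have h := keyR (j, l)
      rw [Finset.sum_eq_single ((l, j) : Fin d × Fin d)] at h
      · have hval : (realign U) (l, j) (j, l) = C l j := by
          simp only [realign, Matrix.of_apply, hUval]
          simp [hlj, Ne.symm hlj]
        rw [hval, star_mul_self_c] at h
        exact_mod_cast h
      · intro p _ hp
        have hval : (realign U) p (j, l) = 0 := by
          simp only [realign, Matrix.of_apply, hUval]
          have h1 : ¬(p.1 = p.2 ∧ j = l) := fun h => hlj h.2.symm
          have h2 : ¬(p.1 = l ∧ j = p.2 ∧ p.1 ≠ j) := by
            rintro ⟨ha, hb, -⟩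
            exact hp (Prod.ext ha hb.symm)
          simp [h1, h2]
        rw [hval, mul_zero]
      · simp
    have hAdiag : ∀ k, Complex.normSq (A k k) = 1 := by
      intro k
      have h := keyX (k, k)
      rw [Finset.sum_eq_single ((k, k) : Fin d × Fin d)] at h
      · have hval : U (k, k) (k, k) = A k k := by simp [hUval]
        rw [hval, star_mul_self_c] at h
        exact_mod_cast h
      · intro p _ hp
        have hval : U p (k, k) = 0 := by
          rw [hUval]
          have h1 : ¬(p.1 = k ∧ p.2 = k) := fun h => hp (Prod.ext h.1 h.2)
          have h2 : ¬(p.1 = k ∧ p.2 = k ∧ p.1 ≠ p.2) := fun h => h1 ⟨h.1, h.2.1⟩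
          simp [h1, h2]
        rw [hval, mul_zero]
      · simp
    have hAoff : ∀ k l, k ≠ l → A k l = 0 := by
      intro k l hkl
      have h := keyX (k, l)
      have hsub : ∑ p : Fin d × Fin d, star (U p (k, l)) * U p (k, l)
          = ∑ p ∈ ({(k, l), (l, k)} : Finset (Fin d × Fin d)),
              star (U p (k, l)) * U p (k, l) := by
        refine (Finset.sum_subset (Finset.subset_univ _) ?_).symm
        intro p _ hp
        simp only [Finset.mem_insert, Finset.mem_singleton, not_or] at hp
        have hval : U p (k, l) = 0 := by
          rw [hUval]
          have h1 : ¬(p.1 = k ∧ p.2 = l) := fun h => hp.1 (Prod.ext h.1 h.2)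
          have h2 : ¬(p.1 = l ∧ p.2 = k ∧ p.1 ≠ p.2) :=
            fun h => hp.2 (Prod.ext h.1 h.2.1)
          simp [h1, h2]
        rw [hval, mul_zero]
      rw [hsub, Finset.sum_pair (by simp [hkl, Ne.symm hkl, Prod.ext_iff])] at h
      have hv1 : U (k, l) (k, l) = A k l := by simp [hUval, hkl]
      have hv2 : U (l, k) (k, l) = C l k := by simp [hUval, hkl, Ne.symm hkl]
      rw [hv1, hv2, star_mul_self_c, star_mul_self_c, hCoff l k (Ne.symm hkl)] at h
      have : (Complex.normSq (A k l) : ℂ) = 0 := by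
        push_cast at h ⊢; linear_combination h
      exact Complex.normSq_eq_zero.mp (by exact_mod_cast this)
    refine ⟨fun i j => ?_, ?_⟩
    · by_cases hij : i = j
      · subst hij
        have := hAdiag i
        rw [hdiag i] at this
        rw [Complex.norm_def, this, Real.sqrt_one]
      · rw [Complex.norm_def, hCoff i j hij, Real.sqrt_one]
    · ext i j
      by_cases hij : i = j
      · subst hij; rw [Matrix.diagonal_apply_eq]; exact hdiag i
      · rw [Matrix.diagonal_apply_ne _ hij]; exact hAoff i j hij
  · rintro ⟨hC, hA⟩
    have hUval' : ∀ p q : Fin d × Fin d,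
        U p q = if q.1 = p.2 ∧ q.2 = p.1 then C p.1 p.2 else 0 := by
      intro p q
      rw [hUval, hA]
      rcases p with ⟨i, j⟩
      rcases q with ⟨k, l⟩
      simp only
      by_cases hij : i = j
      · subst hij
        by_cases hk : k = i <;> by_cases hl : l = i <;>
          simp [Matrix.diagonal_apply, hk, hl] <;> aesop
      · rw [Matrix.diagonal_apply_ne _ hij]
        by_cases hk : k = j <;> by_cases hl : l = i <;> simp [hk, hl, hij] <;> aesop
    have hReq : realign U = U := by
      ext p q
      simp only [realign, Matrix.of_apply, hUval']
      rcases p with ⟨i, j⟩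
      rcases q with ⟨k, l⟩
      simp only
      by_cases h1 : j = k
      · subst h1; simp
      · rw [if_neg (fun h => h1 h.1), if_neg (fun h : k = j ∧ l = i => h1 h.1.symm)]
    have hmem : U ∈ Matrix.unitaryGroup (Fin d × Fin d) ℂ := by
      rw [Matrix.mem_unitaryGroup_iff]
      ext p q
      rw [Matrix.mul_apply]
      rw [Finset.sum_eq_single ((p.2, p.1) : Fin d × Fin d)]
      · rw [Matrix.star_apply, hUval' p (p.2, p.1), hUval' q (p.2, p.1)]
        by_cases hpq : p = q
        · subst hpq
          rw [Matrix.one_apply_eq, mul_comm, star_mul_self_c, Complex.normSq_eq_norm_sq]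
          simp [hC]
        · have hne : ¬((p.2, p.1).1 = q.2 ∧ (p.2, p.1).2 = q.1) := by
            rintro ⟨h1, h2⟩
            exact hpq (Prod.ext h2 h1)
          rw [if_neg hne, Matrix.one_apply_ne hpq, star_zero, mul_zero]
      · intro b _ hb
        have : U p b = 0 := by
          rw [hUval']
          have : ¬(b.1 = p.2 ∧ b.2 = p.1) := fun h => hb (Prod.ext h.1 h.2)
          rw [if_neg this]
        rw [this, zero_mul]
      · simp
    exact ⟨hmem, hReq ▸ hmem⟩
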